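/- The matrix function D(t) := [[∫₀ᵗ Y_τ X_τᵀ dτ, 0],[∫₀ᵗ ∫₀^τ X_τ Z_τᵀ J Z_r X_rᵀ dr dτ, −∫₀ᵗ X_τ Y_τᵀ dτ]] satisfies D(0) = 0 and D'(t) = [[0, 0],[X_t X_tᵀ, 0]] · D(t) + [[Y_t X_tᵀ, 0],[0, −X_t Y_tᵀ]] · Φ⁰(t) for all t ∈ ℝ. (D is the derivative at s = 0 of the fundamental solution of the rescaled Jacobi equation.) -/

import Mathlib

open Matrix intervalIntegral

noncomputable section

lemma hasDerivAt_primitive {g : ℝ → ℝ} (hg : Continuous g) (t : ℝ) :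
    HasDerivAt (fun u => ∫ τ in (0:ℝ)..u, g τ) (g t) t :=
  integral_hasDerivAt_right (hg.intervalIntegrable 0 t)
    hg.aestronglyMeasurable.stronglyMeasurableAtFilter hg.continuousAt

lemma mul_integral_entry {m p q : Type*} [Fintype p] [DecidableEq p]
    (M : Matrix m p ℝ) (N : ℝ → Matrix p q ℝ)
    (hN : ∀ l j, Continuous fun r => N r l j) (t : ℝ) (i : m) (j : q) :
    (M * Matrix.of fun l j => ∫ r in (0:ℝ)..t, N r l j) i j
      = ∫ r in (0:ℝ)..t, (M * N r) i j := by
  simp only [Matrix.mul_apply, Matrix.of_apply]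
  rw [intervalIntegral.integral_finset_sum]
  · simp [intervalIntegral.integral_const_mul]
  · exact fun l _ => (((continuous_const.mul (hN l j))).intervalIntegrable 0 t)

theorem statement5 (n k : ℕ)
    (X Y : ℝ → Matrix (Fin n) (Fin k) ℝ) (hX : Continuous X) (hY : Continuous Y)
    (Z : ℝ → Matrix (Fin n ⊕ Fin n) (Fin k) ℝ)
    (hZ : ∀ t, Z t = Matrix.fromRows (Y t) (X t))
    (J : Matrix (Fin n ⊕ Fin n) (Fin n ⊕ Fin n) ℝ)
    (hJ : J = Matrix.fromBlocks 0 (-1) 1 0)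
    (Φ₀ D : ℝ → Matrix (Fin n ⊕ Fin n) (Fin n ⊕ Fin n) ℝ)
    (hΦ₀ : ∀ t, Φ₀ t = Matrix.fromBlocks 1 0
      (Matrix.of fun i j => ∫ τ in (0:ℝ)..t, (X τ * (X τ)ᵀ) i j) 1)
    (hD : ∀ t, D t = Matrix.fromBlocks
      (Matrix.of fun i j => ∫ τ in (0:ℝ)..t, (Y τ * (X τ)ᵀ) i j)
      0
      (Matrix.of fun i j => ∫ τ in (0:ℝ)..t, ∫ r in (0:ℝ)..τ,
        (X τ * (Z τ)ᵀ * J * Z r * (X r)ᵀ) i j)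
      (-(Matrix.of fun i j => ∫ τ in (0:ℝ)..t, (X τ * (Y τ)ᵀ) i j))) :
    D 0 = 0 ∧
    ∀ t, ∀ i j, HasDerivAt (fun τ => D τ i j)
      ((Matrix.fromBlocks 0 0 (X t * (X t)ᵀ) 0 * D t
          + Matrix.fromBlocks (Y t * (X t)ᵀ) 0 0 (-(X t * (Y t)ᵀ)) * Φ₀ t :
        Matrix (Fin n ⊕ Fin n) (Fin n ⊕ Fin n) ℝ) i j) t := by
  -- key matrix identity
  have key : ∀ t r, X t * (Z t)ᵀ * J * Z r * (X r)ᵀ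
      = X t * (X t)ᵀ * (Y r * (X r)ᵀ) - X t * (Y t)ᵀ * (X r * (X r)ᵀ) := by
    intro t r
    rw [hZ, hZ, hJ, Matrix.transpose_fromRows, Matrix.mul_fromCols,
      Matrix.fromCols_mul_fromBlocks, Matrix.fromCols_mul_fromRows]
    simp [Matrix.mul_assoc, Matrix.add_mul, sub_eq_add_neg, Matrix.neg_mul]
  -- continuity of entries
  have hYX : ∀ (i : Fin n) (j : Fin n), Continuous fun τ => (Y τ * (X τ)ᵀ) i j :=
    fun i j => ((hY.matrix_mul hX.matrix_transpose).matrix_elem i j)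
  have hXY : ∀ (i : Fin n) (j : Fin n), Continuous fun τ => (X τ * (Y τ)ᵀ) i j :=
    fun i j => ((hX.matrix_mul hY.matrix_transpose).matrix_elem i j)
  have hXX : ∀ (i : Fin n) (j : Fin n), Continuous fun τ => (X τ * (X τ)ᵀ) i j :=
    fun i j => ((hX.matrix_mul hX.matrix_transpose).matrix_elem i j)
  have hh : ∀ (i : Fin n) (j : Fin n),
      Continuous fun p : ℝ × ℝ => (X p.1 * (Z p.1)ᵀ * J * Z p.2 * (X p.2)ᵀ) i j := by
    intro i j
    have : Continuous fun p : ℝ × ℝ =>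
        (X p.1 * (X p.1)ᵀ * (Y p.2 * (X p.2)ᵀ) - X p.1 * (Y p.1)ᵀ * (X p.2 * (X p.2)ᵀ)) i j := by
      apply Continuous.matrix_elem
      apply Continuous.sub
      · exact ((hX.comp continuous_fst).matrix_mul
          (hX.comp continuous_fst).matrix_transpose).matrix_mul
          ((hY.comp continuous_snd).matrix_mul (hX.comp continuous_snd).matrix_transpose)
      · exact ((hX.comp continuous_fst).matrix_mul
          (hY.comp continuous_fst).matrix_transpose).matrix_mul
          ((hX.comp continuous_snd).matrix_mul (hX.comp continuous_snd).matrix_transpose)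
    simpa only [key] using this
  constructor
  · ext i j
    rcases i with i | i <;> rcases j with j | j <;>
      simp [hD, intervalIntegral.integral_same]
  · intro t i j
    -- simplify the RHS
    rw [hD t, hΦ₀ t, Matrix.fromBlocks_multiply, Matrix.fromBlocks_multiply,
      Matrix.fromBlocks_add]
    rcases i with i | i <;> rcases j with j | j
    · simp only [Matrix.fromBlocks_apply₁₁, Matrix.zero_mul, Matrix.mul_zero, add_zero,
        zero_add, Matrix.mul_one]
      have := hasDerivAt_primitive (hYX i j) t
      refine HasDerivAt.congr_deriv (this.congr_of_eventuallyEq ?_) ?_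
      · filter_upwards with τ; rw [hD τ]; simp
      · simp
    · have : (fun τ => D τ (Sum.inl i) (Sum.inr j)) = fun _ => (0:ℝ) := by
        funext τ; rw [hD τ]; simp
      rw [this]
      simp only [Matrix.fromBlocks_apply₁₂, Matrix.zero_mul, Matrix.mul_zero, add_zero,
        zero_add, Matrix.mul_one, Matrix.one_mul]
      simpa using hasDerivAt_const t (0:ℝ)
    · -- the hard block
      simp only [Matrix.fromBlocks_apply₂₁, Matrix.zero_mul, Matrix.mul_zero, add_zero,
        zero_add, Matrix.mul_one, Matrix.one_mul, Matrix.add_apply, Matrix.neg_mul,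
        Matrix.neg_apply]
      set g : ℝ → ℝ := fun τ => ∫ r in (0:ℝ)..τ, (X τ * (Z τ)ᵀ * J * Z r * (X r)ᵀ) i j with hg
      have hgc : Continuous g :=
        continuous_parametric_intervalIntegral_of_continuous
          (f := fun τ r => (X τ * (Z τ)ᵀ * J * Z r * (X r)ᵀ) i j) (hh i j) continuous_id
      have hder := hasDerivAt_primitive hgc t
      have heq : (fun τ => D τ (Sum.inr i) (Sum.inl j))
          = fun τ => ∫ τ' in (0:ℝ)..τ, g τ' := by
        funext τ; rw [hD τ]; simp [hg]
      rw [heq]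
      refine hder.congr_deriv ?_
      have h1 : g t = (∫ r in (0:ℝ)..t, (X t * (X t)ᵀ * (Y r * (X r)ᵀ)) i j)
          - ∫ r in (0:ℝ)..t, (X t * (Y t)ᵀ * (X r * (X r)ᵀ)) i j := by
        rw [hg]
        simp only [key, Matrix.sub_apply]
        rw [intervalIntegral.integral_sub]
        · exact ((continuous_const.matrix_mul
            (hY.matrix_mul hX.matrix_transpose)).matrix_elem i j).intervalIntegrable 0 t
        · exact ((continuous_const.matrix_mul
            (hX.matrix_mul hX.matrix_transpose)).matrix_elem i j).intervalIntegrable 0 t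
      have h2 := mul_integral_entry (X t * (X t)ᵀ) (fun r => Y r * (X r)ᵀ) hYX t i j
      have h3 := mul_integral_entry (X t * (Y t)ᵀ) (fun r => X r * (X r)ᵀ) hXX t i j
      rw [h1, ← h2, ← h3]
      ring
    · simp only [Matrix.fromBlocks_apply₂₂, Matrix.zero_mul, Matrix.mul_zero, add_zero,
        zero_add, Matrix.mul_one, Matrix.one_mul, Matrix.neg_apply, Matrix.add_apply]
      have := (hasDerivAt_primitive (hXY i j) t).neg
      refine HasDerivAt.congr_deriv (this.congr_of_eventuallyEq ?_) ?_
      · filter_upwards with τ; rw [hD τ]; simp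
      · simp
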